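/- In the Braess network with quadratic cost c(x) = x − x²/2 and no incentives, the flow (f_{p1}, f_{p2}, f_{p3}) = (1/2, 0, 1/2) minimizes the social cost C°(f) = Σ_e c_e(f_e) f_e + Σ_{v∈{v,w}} c_v(f_v) f_v over all feasible flows, and the minimum value is 15/8. -/
import Mathlib


/-- Quadratic latency `c(x) = x - x²/2` on edges `e1` and `e4` of the Braess network. -/
noncomputable def c (x : ℝ) : ℝ := x - x^2/2

/-- The no-incentive social cost `C°(f)` of the Braess network:
`Σ_e c_e(f_e)·f_e + c_v(f_v)·f_v + c_w(f_w)·f_w` with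
`f_{e1} = f_v = f 0 + f 1`, `f_{e2} = f 2`, `f_{e3} = f 0`,
`f_{e4} = f_w = f 1 + f 2`, `f_{e5} = f 1`. -/
noncomputable def Co (f : Fin 3 → ℝ) : ℝ :=
  c (f 0 + f 1) * (f 0 + f 1) + 1 * f 2 + 1 * f 0 +
  c (f 1 + f 2) * (f 1 + f 2) + 0 * f 1 +
  (f 0 + f 1) * (f 0 + f 1) + (f 1 + f 2) * (f 1 + f 2)

/-- In the quadratic Braess network with no incentives, the flow
`(1/2, 0, 1/2)` minimizes `C°` over all feasible flows, with minimum value `15/8`. -/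
theorem braess_quadratic_social_optimum :
    (∀ g : Fin 3 → ℝ, (∀ i, 0 ≤ g i) → (∑ i, g i) = 1 →
      Co ![1/2, 0, 1/2] ≤ Co g) ∧
    Co ![1/2, 0, 1/2] = 15/8 := by
  constructor
  · intro g hg hsum
    have h0 := hg 0
    have h1 := hg 1
    have h2 := hg 2
    have hs : g 0 + g 1 + g 2 = 1 := by
      simpa [Fin.sum_univ_three] using hsum
    simp only [Co, c, Matrix.cons_val_zero, Matrix.cons_val_one, Matrix.head_cons,
      Matrix.cons_val_two, Matrix.tail_cons]
    nlinarith [sq_nonneg (g 0 + g 1 - 1/2), sq_nonneg (g 1 + g 2 - 1/2),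
      mul_nonneg h0 (sq_nonneg (g 0 + g 1 - 1/2)),
      mul_nonneg h2 (sq_nonneg (g 0 + g 1 - 1/2)),
      mul_nonneg h0 (sq_nonneg (g 1 + g 2 - 1/2)),
      mul_nonneg h2 (sq_nonneg (g 1 + g 2 - 1/2)),
      mul_nonneg h1 (sq_nonneg (g 0 + g 1 - 1/2)),
      mul_nonneg h1 (sq_nonneg (g 1 + g 2 - 1/2)), h1]
  · simp only [Co, c, Matrix.cons_val_zero, Matrix.cons_val_one, Matrix.head_cons,
      Matrix.cons_val_two, Matrix.tail_cons]
    norm_num
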